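/- Let n ≥ 1, let T ⊆ {1,…,n} be nonempty with t = |T| and s = n − t, let D be a positive integer, and let α ∈ ℤ_{≥0}^T satisfy ∏_{i∈T}(α_i + 1) ≤ D. Then B(α, T) := #{β ∈ ℤ_{≥0}^n : |β| ≤ D and β_i ≤ α_i for all i ∈ T} satisfies B(α, T) ≥ (1/2^t) · ∏_{i∈T}(α_i + 1) · binom(⌊D/2⌋ + s, s). -/

import Mathlib

open Finset

/-- The finset of tuples `Fin s → ℕ` with sum at most `m`. -/
private def Ssb (s m : ℕ) : Finset (Fin s → ℕ) :=
  (Fintype.piFinset fun _ : Fin s => Finset.range (m + 1)).filter (fun f => ∑ i, f i ≤ m)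

private lemma mem_Ssb {s m : ℕ} {f : Fin s → ℕ} : f ∈ Ssb s m ↔ ∑ i, f i ≤ m := by
  simp only [Ssb, Finset.mem_filter, Fintype.mem_piFinset, Finset.mem_range, Nat.lt_succ_iff]
  constructor
  · exact fun h => h.2
  · intro h
    exact ⟨fun i => le_trans
      (Finset.single_le_sum (fun j _ => Nat.zero_le _) (Finset.mem_univ i)) h, h⟩

private lemma card_Ssb : ∀ s m, (Ssb s m).card = (m + s).choose s := by
  intro s
  induction s with
  | zero =>
    intro m
    rw [Ssb, Finset.filter_true_of_mem (fun f _ => by simp)]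
    simp [Fintype.card_piFinset]
  | succ s ih =>
    intro m
    have inj : Function.Injective
        (fun p : Σ _ : ℕ, (Fin s → ℕ) => Fin.cons p.1 p.2 : _ → Fin (s+1) → ℕ) := by
      rintro ⟨x, f⟩ ⟨y, g⟩ h
      have h0 : x = y := by simpa using congrFun h 0
      have h1 : f = g := by
        funext i; simpa using congrFun h i.succ
      subst h0; subst h1; rfl
    have key : Ssb (s+1) m =
        ((Finset.range (m+1)).sigma (fun x => Ssb s (m - x))).map ⟨_, inj⟩ := by
      ext g
      rw [mem_Ssb, Finset.mem_map]
      constructor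
      · intro hg
        have hsum : ∑ i, g i = g 0 + ∑ i : Fin s, g i.succ := Fin.sum_univ_succ g
        refine ⟨⟨g 0, Fin.tail g⟩, Finset.mem_sigma.2 ⟨?_, ?_⟩, Fin.cons_self_tail g⟩
        · show g 0 ∈ Finset.range (m + 1)
          rw [Finset.mem_range, Nat.lt_succ_iff]; omega
        · show Fin.tail g ∈ Ssb s (m - g 0)
          refine mem_Ssb.2 ?_
          show ∑ i : Fin s, g i.succ ≤ m - g 0
          omega
      · rintro ⟨⟨x, f⟩, hp, rfl⟩
        obtain ⟨hp1, hp2⟩ := Finset.mem_sigma.1 hp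
        have hx : x ≤ m := by
          have : x ∈ Finset.range (m + 1) := hp1
          rw [Finset.mem_range, Nat.lt_succ_iff] at this
          exact this
        have hf : ∑ i, f i ≤ m - x := mem_Ssb.1 hp2
        show ∑ i : Fin (s + 1), (Fin.cons x f : Fin (s + 1) → ℕ) i ≤ m
        have hcs : ∑ i : Fin (s + 1), (Fin.cons x f : Fin (s + 1) → ℕ) i = x + ∑ i, f i := by
          rw [Fin.sum_univ_succ]; simp
        omega
    rw [key, Finset.card_map, Finset.card_sigma]
    have h1 : ∑ x ∈ Finset.range (m+1), (Ssb s (m - x)).card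
        = ∑ x ∈ Finset.range (m+1), ((m - x) + s).choose s := by
      simp [ih]
    rw [h1]
    have h2 : ∑ x ∈ Finset.range (m+1), ((m - x) + s).choose s
        = ∑ x ∈ Finset.range (m+1), (x + s).choose s := by
      have := Finset.sum_range_reflect (fun j => (j + s).choose s) (m+1)
      simpa using this
    rw [h2, Nat.sum_range_add_choose m s]
    rfl

private lemma half_le (a : ℕ) : a ≤ 2 * (a / 2) + 1 := by omega

private lemma sum_add_one_le_prod {ι : Type*} (T : Finset ι) (a : ι → ℕ) :
    ∑ i ∈ T, a i + 1 ≤ ∏ i ∈ T, (a i + 1) := by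
  induction T using Finset.cons_induction with
  | empty => simp
  | cons i s hi ih =>
    rw [Finset.sum_cons, Finset.prod_cons]
    have hp : 1 ≤ ∏ j ∈ s, (a j + 1) :=
      Finset.one_le_prod' (fun j _ => Nat.le_add_left 1 _)
    calc a i + ∑ j ∈ s, a j + 1 ≤ a i * 1 + ∏ j ∈ s, (a j + 1) := by omega
      _ ≤ a i * ∏ j ∈ s, (a j + 1) + ∏ j ∈ s, (a j + 1) := by
          exact Nat.add_le_add_right (Nat.mul_le_mul_left _ hp) _
      _ = (a i + 1) * ∏ j ∈ s, (a j + 1) := by ring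

theorem B_lower_bound (n : ℕ) (hn : 1 ≤ n) (T : Finset (Fin n)) (hT : T.Nonempty)
    (D : ℕ) (hD : 0 < D) (α : Fin n → ℕ)
    (hα : ∏ i ∈ T, (α i + 1) ≤ D) :
    (1 / 2 ^ T.card : ℝ) * (∏ i ∈ T, ((α i : ℝ) + 1)) *
        ((D / 2 + (n - T.card)).choose (n - T.card) : ℝ) ≤
      (Set.ncard {β : Fin n → ℕ | ∑ i, β i ≤ D ∧ ∀ i ∈ T, β i ≤ α i} : ℝ) := by
  classical
  set t := T.card with ht
  set s := n - T.card with hs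
  set A : Finset (Fin n → ℕ) :=
    Fintype.piFinset (fun i => Finset.range (if i ∈ T then α i / 2 + 1 else 1)) with hA
  set Bf : Finset (Fin n → ℕ) :=
    (Fintype.piFinset (fun i : Fin n => Finset.range (if i ∈ T then 1 else D / 2 + 1))).filter
      (fun f => ∑ i, f i ≤ D / 2) with hB
  -- membership facts
  have hmemA : ∀ γ ∈ A, (∀ i ∈ T, γ i ≤ α i / 2) ∧ (∀ i, i ∉ T → γ i = 0) := by
    intro γ hγ
    rw [hA, Fintype.mem_piFinset] at hγ
    constructor
    · intro i hi
      have := hγ i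
      rw [if_pos hi, Finset.mem_range, Nat.lt_succ_iff] at this
      exact this
    · intro i hi
      have := hγ i
      rw [if_neg hi, Finset.mem_range] at this
      omega
  have hmemB : ∀ δ ∈ Bf, (∀ i ∈ T, δ i = 0) ∧ ∑ i, δ i ≤ D / 2 := by
    intro δ hδ
    rw [hB, Finset.mem_filter, Fintype.mem_piFinset] at hδ
    refine ⟨fun i hi => ?_, hδ.2⟩
    have := hδ.1 i
    rw [if_pos hi, Finset.mem_range] at this
    omega
  -- cardinality of A
  have hAcard : A.card = ∏ i ∈ T, (α i / 2 + 1) := by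
    rw [hA, Fintype.card_piFinset]
    simp only [Finset.card_range]
    rw [Finset.prod_ite_mem Finset.univ T (fun i => α i / 2 + 1), Finset.univ_inter]
  -- cardinality of Bf
  have hTc : Tᶜ.card = s := by
    rw [Finset.card_compl, Fintype.card_fin]
  have eqv : Fin s ≃ {x // x ∈ Tᶜ} := (Tᶜ.equivFinOfCardEq hTc).symm
  have hBcard : Bf.card = (D / 2 + s).choose s := by
    rw [← card_Ssb s (D / 2)]
    have hbwd : ∀ (g : Fin s → ℕ) (x : {x // x ∈ Tᶜ}),
        (if h : (x : Fin n) ∈ Tᶜ then g (eqv.symm ⟨x, h⟩) else 0) = g (eqv.symm x) :=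
      fun g x => dif_pos x.2
    have hsum_bwd : ∀ g : Fin s → ℕ,
        ∑ i : Fin n, (if h : i ∈ Tᶜ then g (eqv.symm ⟨i, h⟩) else 0) = ∑ j : Fin s, g j := by
      intro g
      have h1 : ∑ i : Fin n, (if h : i ∈ Tᶜ then g (eqv.symm ⟨i, h⟩) else 0)
          = ∑ i ∈ Tᶜ, (if h : i ∈ Tᶜ then g (eqv.symm ⟨i, h⟩) else 0) :=
        (Finset.sum_subset (Finset.subset_univ _) (fun i _ hi => by rw [dif_neg hi])).symm
      have h2 : ∑ i ∈ Tᶜ, (if h : i ∈ Tᶜ then g (eqv.symm ⟨i, h⟩) else 0)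
          = ∑ x ∈ Tᶜ.attach, (if h : (x : Fin n) ∈ Tᶜ then g (eqv.symm ⟨x, h⟩) else 0) :=
        (Finset.sum_attach Tᶜ _).symm
      rw [h1, h2]
      have h3 : ∑ x ∈ Tᶜ.attach, (if h : (x : Fin n) ∈ Tᶜ then g (eqv.symm ⟨x, h⟩) else 0)
          = ∑ x : {x // x ∈ Tᶜ}, g (eqv.symm x) := by
        rw [← Finset.univ_eq_attach]
        exact Finset.sum_congr rfl (fun x _ => hbwd g x)
      rw [h3]
      exact Equiv.sum_comp eqv.symm g
    refine Finset.card_nbij' (fun f j => f (eqv j))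
      (fun g i => if h : i ∈ Tᶜ then g (eqv.symm ⟨i, h⟩) else 0) ?_ ?_ ?_ ?_
    · intro f hf
      obtain ⟨hf0, hfsum⟩ := hmemB f hf
      have hg : ∑ j : Fin s, f (eqv j) ≤ D / 2 := by
        have h1 : ∑ j : Fin s, f (eqv j) = ∑ x : {x // x ∈ Tᶜ}, f x :=
          Equiv.sum_comp eqv (fun x : {x // x ∈ Tᶜ} => f x)
        have h2 : ∑ x : {x // x ∈ Tᶜ}, f (x : Fin n) = ∑ i ∈ Tᶜ, f i := by
          rw [← Finset.sum_attach Tᶜ (fun i => f i), Finset.univ_eq_attach]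
        have h3 : ∑ i ∈ Tᶜ, f i ≤ ∑ i, f i :=
          Finset.sum_le_sum_of_subset (Finset.subset_univ _)
        omega
      exact mem_Ssb.2 hg
    · intro g hg
      rw [Finset.mem_coe, mem_Ssb] at hg
      have hval : ∀ j : Fin s, g j ≤ D / 2 := fun j =>
        le_trans (Finset.single_le_sum (fun _ _ => Nat.zero_le _) (Finset.mem_univ j)) hg
      rw [Finset.mem_coe, hB, Finset.mem_filter, Fintype.mem_piFinset]
      constructor
      · intro i
        show (if h : i ∈ Tᶜ then g (eqv.symm ⟨i, h⟩) else 0)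
            ∈ Finset.range (if i ∈ T then 1 else D / 2 + 1)
        by_cases hi : i ∈ T
        · rw [if_pos hi, dif_neg (by simpa using hi)]
          simp
        · rw [if_neg hi, dif_pos (by simpa using hi), Finset.mem_range, Nat.lt_succ_iff]
          exact hval _
      · show ∑ i : Fin n, (if h : i ∈ Tᶜ then g (eqv.symm ⟨i, h⟩) else 0) ≤ D / 2
        rw [hsum_bwd g]
        exact hg
    · intro f hf
      obtain ⟨hf0, _⟩ := hmemB f hf
      funext i
      show (if h : i ∈ Tᶜ then f (eqv (eqv.symm ⟨i, h⟩)) else 0) = f i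
      by_cases hi : i ∈ Tᶜ
      · rw [dif_pos hi, eqv.apply_symm_apply]
      · rw [dif_neg hi]
        exact (hf0 i (by simpa using hi)).symm
    · intro g hg
      funext j
      show (if h : ((eqv j : {x // x ∈ Tᶜ}) : Fin n) ∈ Tᶜ then g (eqv.symm ⟨eqv j, h⟩) else 0)
          = g j
      rw [hbwd g (eqv j), eqv.symm_apply_apply]
  -- the image finset
  set C : Finset (Fin n → ℕ) := (A ×ˢ Bf).image (fun p => p.1 + p.2) with hC
  have hCcard : C.card = A.card * Bf.card := by
    rw [hC, Finset.card_image_of_injOn, Finset.card_product]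
    intro p hp q hq hpq
    simp only [Finset.coe_product, Set.mem_prod, Finset.mem_coe] at hp hq
    obtain ⟨hp1, hp2⟩ := hp
    obtain ⟨hq1, hq2⟩ := hq
    have hp1' := hmemA _ hp1; have hp2' := hmemB _ hp2
    have hq1' := hmemA _ hq1; have hq2' := hmemB _ hq2
    have h1 : p.1 = q.1 := by
      funext i
      by_cases hi : i ∈ T
      · have := congrFun hpq i
        simp only [Pi.add_apply] at this
        rw [hp2'.1 i hi, hq2'.1 i hi] at this
        omega
      · rw [hp1'.2 i hi, hq1'.2 i hi]
    have h2 : p.2 = q.2 := by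
      funext i
      have := congrFun hpq i
      simp only [Pi.add_apply] at this
      rw [congrFun h1 i] at this
      omega
    exact Prod.ext h1 h2
  -- members of C lie in the target set
  have hsub : (C : Set (Fin n → ℕ)) ⊆ {β : Fin n → ℕ | ∑ i, β i ≤ D ∧ ∀ i ∈ T, β i ≤ α i} := by
    intro β hβ
    rw [Finset.coe_image] at hβ
    obtain ⟨p, hp, rfl⟩ := hβ
    simp only [Finset.coe_product, Set.mem_prod, Finset.mem_coe] at hp
    obtain ⟨hp1, hp2⟩ := hp
    have h1 := hmemA _ hp1
    have h2 := hmemB _ hp2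
    constructor
    · -- sum bound
      show ∑ i, (p.1 + p.2) i ≤ D
      have hsplit : ∑ i, (p.1 + p.2) i = ∑ i, p.1 i + ∑ i, p.2 i := by
        simp [Finset.sum_add_distrib]
      have hγ : ∑ i, p.1 i = ∑ i ∈ T, p.1 i :=
        (Finset.sum_subset (Finset.subset_univ T) (fun i _ hi => h1.2 i hi)).symm
      have hγ2 : ∑ i ∈ T, p.1 i ≤ ∑ i ∈ T, (α i / 2) :=
        Finset.sum_le_sum (fun i hi => h1.1 i hi)
      have hhalf : 2 * ∑ i ∈ T, (α i / 2) ≤ ∑ i ∈ T, α i := by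
        rw [Finset.mul_sum]
        exact Finset.sum_le_sum (fun i _ => by omega)
      have hAM : ∑ i ∈ T, α i + 1 ≤ D := le_trans (sum_add_one_le_prod T α) hα
      have hδ := h2.2
      have hD2 : 2 * (D / 2) ≤ D := by omega
      omega
    · intro i hi
      show p.1 i + p.2 i ≤ α i
      rw [h2.1 i hi]
      have := h1.1 i hi
      have := Nat.div_le_self (α i) 2
      omega
  -- finiteness of the target set
  have hfin : ({β : Fin n → ℕ | ∑ i, β i ≤ D ∧ ∀ i ∈ T, β i ≤ α i}).Finite := by
    apply Set.Finite.subset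
      (Finset.finite_toSet (Fintype.piFinset fun _ : Fin n => Finset.range (D + 1)))
    intro β hβ
    simp only [Finset.coe_sort_coe, Finset.mem_coe, Fintype.mem_piFinset, Finset.mem_range,
      Nat.lt_succ_iff]
    intro i
    exact le_trans (Finset.single_le_sum (fun _ _ => Nat.zero_le _) (Finset.mem_univ i)) hβ.1
  -- ncard lower bound
  have hncard : (C.card : ℕ) ≤
      ({β : Fin n → ℕ | ∑ i, β i ≤ D ∧ ∀ i ∈ T, β i ≤ α i}).ncard := by
    have := Set.ncard_le_ncard hsub hfin
    rwa [Set.ncard_coe_finset] at this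
  -- real arithmetic
  have hch : (0:ℝ) ≤ ((D / 2 + s).choose s : ℝ) := Nat.cast_nonneg _
  have hQ : ∏ i ∈ T, ((α i : ℝ) + 1) ≤ 2 ^ t * ∏ i ∈ T, ((α i / 2 : ℕ) + 1 : ℝ) := by
    have h1 : ∏ i ∈ T, ((α i : ℝ) + 1) ≤ ∏ i ∈ T, (2 * ((α i / 2 : ℕ) + 1) : ℝ) := by
      apply Finset.prod_le_prod
      · intro i _; positivity
      · intro i _
        have hnat := half_le (α i)
        have hcast : (α i : ℝ) ≤ 2 * (α i / 2 : ℕ) + 1 := by exact_mod_cast hnat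
        push_cast
        linarith
    calc ∏ i ∈ T, ((α i : ℝ) + 1) ≤ ∏ i ∈ T, (2 * ((α i / 2 : ℕ) + 1) : ℝ) := h1
      _ = 2 ^ t * ∏ i ∈ T, ((α i / 2 : ℕ) + 1 : ℝ) := by
          rw [Finset.prod_mul_distrib, Finset.prod_const, ht]
  have h2pow : (0:ℝ) < 2 ^ t := by positivity
  calc (1 / 2 ^ t : ℝ) * (∏ i ∈ T, ((α i : ℝ) + 1)) * ((D / 2 + s).choose s : ℝ)
      ≤ (1 / 2 ^ t : ℝ) * (2 ^ t * ∏ i ∈ T, ((α i / 2 : ℕ) + 1 : ℝ)) *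
          ((D / 2 + s).choose s : ℝ) := by
        refine mul_le_mul_of_nonneg_right (mul_le_mul_of_nonneg_left hQ ?_) hch
        positivity
    _ = (∏ i ∈ T, ((α i / 2 : ℕ) + 1 : ℝ)) * ((D / 2 + s).choose s : ℝ) := by
        field_simp
    _ = ((A.card * Bf.card : ℕ) : ℝ) := by
        rw [hAcard, hBcard]
        push_cast
        ring
    _ = (C.card : ℝ) := by rw [hCcard]
    _ ≤ (({β : Fin n → ℕ | ∑ i, β i ≤ D ∧ ∀ i ∈ T, β i ≤ α i}).ncard : ℝ) := by
        exact_mod_cast hncard
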